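/- Exact closed form of the Poisson series used in the error-floor formula (corrected version of equation (52)): for every integer ν ≥ 1 and every real λ, the series ∑_{m=ν}^∞ e^{−λ} λ^m / (m · (m−ν)!) converges and equals ∑_{k=0}^{ν−1} (−1)^{ν−1+k} ((ν−1)!/k!) λ^k + (−1)^{ν} (ν−1)! e^{−λ}. -/

import Mathlib

open Finset

lemma hexp (lam : ℝ) : HasSum (fun j : ℕ => lam ^ j / (Nat.factorial j : ℝ)) (Real.exp lam) := by
  have := NormedSpace.expSeries_div_hasSum_exp (𝔸 := ℝ) lam
  rwa [← Real.exp_eq_exp_ℝ] at this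

lemma aux (lam : ℝ) : ∀ n : ℕ,
    HasSum (fun j : ℕ =>
        Real.exp (-lam) * lam ^ (n + 1 + j) / (((n + 1 + j : ℕ) : ℝ) * (Nat.factorial j : ℝ)))
      ((∑ k ∈ Finset.range (n + 1), (-1 : ℝ) ^ (n + k) *
          ((Nat.factorial n : ℝ) / (Nat.factorial k : ℝ)) * lam ^ k)
        + (-1 : ℝ) ^ (n + 1) * (Nat.factorial n : ℝ) * Real.exp (-lam)) := by
  have hme : Real.exp (-lam) * Real.exp lam = 1 := by
    rw [← Real.exp_add]; simp
  intro n
  induction n with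
  | zero =>
    have h0 : HasSum (fun j : ℕ => Real.exp (-lam) * (lam ^ j / (Nat.factorial j : ℝ))) 1 := by
      simpa [hme] using (hexp lam).mul_left (Real.exp (-lam))
    have h1 := (hasSum_nat_add_iff' (f := fun j : ℕ => Real.exp (-lam) * (lam ^ j / (Nat.factorial j : ℝ))) 1).2 h0
    simp only [Finset.range_one, Finset.sum_singleton, pow_zero, Nat.factorial_zero] at h1
    have heq : (fun j : ℕ => Real.exp (-lam) * lam ^ (0 + 1 + j) / (((0 + 1 + j : ℕ) : ℝ) * (Nat.factorial j : ℝ)))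
        = fun j : ℕ => Real.exp (-lam) * (lam ^ (j + 1) / (Nat.factorial (j + 1) : ℝ)) := by
      funext j
      have hj : (Nat.factorial j : ℝ) ≠ 0 := Nat.cast_ne_zero.2 (Nat.factorial_ne_zero j)
      push_cast [Nat.factorial_succ]
      field_simp
      ring
    rw [heq]
    convert h1 using 1
    · rfl
    norm_num
    ring
  | succ n ih =>
    have hA : HasSum (fun j : ℕ => Real.exp (-lam) * lam ^ (n + 1) * (lam ^ j / (Nat.factorial j : ℝ))) (lam ^ (n + 1)) := by
      have := (hexp lam).mul_left (Real.exp (-lam) * lam ^ (n + 1))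
      convert this using 1
      · rfl
      rw [show Real.exp (-lam) * lam ^ (n + 1) * Real.exp lam
          = lam ^ (n + 1) * (Real.exp (-lam) * Real.exp lam) by ring, hme, mul_one]
    have hB := hA.add (ih.mul_left (-(n + 1 : ℝ)))
    set T := (∑ k ∈ Finset.range (n + 1), (-1 : ℝ) ^ (n + k) *
          ((Nat.factorial n : ℝ) / (Nat.factorial k : ℝ)) * lam ^ k)
        + (-1 : ℝ) ^ (n + 1) * (Nat.factorial n : ℝ) * Real.exp (-lam) with hT
    have hg0 : Real.exp (-lam) * lam ^ (n + 1) * (lam ^ 0 / (Nat.factorial 0 : ℝ))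
        + (-(n + 1 : ℝ)) * (Real.exp (-lam) * lam ^ (n + 1 + 0) / (((n + 1 + 0 : ℕ) : ℝ) * (Nat.factorial 0 : ℝ))) = 0 := by
      push_cast
      have hd : ((n : ℝ) + 1) ≠ 0 := by positivity
      field_simp
      ring
    have hC := (hasSum_nat_add_iff' (f := fun j : ℕ => Real.exp (-lam) * lam ^ (n + 1) * (lam ^ j / (Nat.factorial j : ℝ))
        + (-(n + 1 : ℝ)) * (Real.exp (-lam) * lam ^ (n + 1 + j) / (((n + 1 + j : ℕ) : ℝ) * (Nat.factorial j : ℝ)))) 1).2 hB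
    simp only [Finset.range_one, Finset.sum_singleton, hg0, sub_zero] at hC
    have hfun : ∀ j : ℕ, Real.exp (-lam) * lam ^ (n + 1) * (lam ^ (j + 1) / (Nat.factorial (j + 1) : ℝ))
        + (-(n + 1 : ℝ)) * (Real.exp (-lam) * lam ^ (n + 1 + (j + 1)) / (((n + 1 + (j + 1) : ℕ) : ℝ) * (Nat.factorial (j + 1) : ℝ)))
        = Real.exp (-lam) * lam ^ (n + 1 + 1 + j) / (((n + 1 + 1 + j : ℕ) : ℝ) * (Nat.factorial j : ℝ)) := by
      intro j
      have hj : (Nat.factorial j : ℝ) ≠ 0 := Nat.cast_ne_zero.2 (Nat.factorial_ne_zero j)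
      have hd : ((n : ℝ) + 2 + j) ≠ 0 := by positivity
      push_cast [Nat.factorial_succ]
      field_simp
      ring
    have hC' : HasSum (fun j : ℕ =>
        Real.exp (-lam) * lam ^ (n + 1 + 1 + j) / (((n + 1 + 1 + j : ℕ) : ℝ) * (Nat.factorial j : ℝ)))
        (lam ^ (n + 1) + (-(n + 1 : ℝ)) * T) := by
      convert hC using 2 with j
      · rfl
      exact (hfun j).symm
    convert hC' using 1
    rw [hT, Finset.sum_range_succ, mul_add, Finset.mul_sum]
    have h2 : (-1 : ℝ) ^ (n + 1 + (n + 1)) = 1 := by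
      rw [show n + 1 + (n + 1) = 2 * (n + 1) by ring, pow_mul]; norm_num
    have hsum : ∀ x ∈ Finset.range (n + 1),
        (-1 : ℝ) ^ (n + 1 + x) * ((Nat.factorial (n + 1) : ℝ) / (Nat.factorial x : ℝ)) * lam ^ x
        = -((n : ℝ) + 1) * ((-1 : ℝ) ^ (n + x) * ((Nat.factorial n : ℝ) / (Nat.factorial x : ℝ)) * lam ^ x) := by
      intro x _
      rw [show n + 1 + x = (n + x) + 1 by ring, pow_succ, Nat.factorial_succ]
      push_cast
      ring
    rw [Finset.sum_congr rfl hsum, h2]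
    have hne : (Nat.factorial (n + 1) : ℝ) ≠ 0 := Nat.cast_ne_zero.2 (Nat.factorial_ne_zero _)
    rw [show (Nat.factorial (n + 1) : ℝ) / (Nat.factorial (n + 1) : ℝ) = 1 from div_self hne]
    rw [show n + 1 + 1 = (n + 1) + 1 from rfl, pow_succ, Nat.factorial_succ]
    push_cast
    ring

/-- Exact closed form of the Poisson series in the error-floor formula (corrected
equation (52)): for every integer `ν ≥ 1` and every real `λ`, the series
`∑_{m=ν}^∞ e^{−λ} λ^m / (m (m−ν)!)` converges (written with the index shift
`m = ν + j`) and equals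
`∑_{k=0}^{ν−1} (−1)^{ν−1+k} ((ν−1)!/k!) λ^k + (−1)^ν (ν−1)! e^{−λ}`. -/
theorem poisson_error_floor_series (ν : ℕ) (hν : 1 ≤ ν) (lam : ℝ) :
    HasSum (fun j : ℕ =>
        Real.exp (-lam) * lam ^ (ν + j) / (((ν + j : ℕ) : ℝ) * (Nat.factorial j : ℝ)))
      ((∑ k ∈ Finset.range ν, (-1 : ℝ) ^ (ν - 1 + k) *
          ((Nat.factorial (ν - 1) : ℝ) / (Nat.factorial k : ℝ)) * lam ^ k)
        + (-1 : ℝ) ^ ν * (Nat.factorial (ν - 1) : ℝ) * Real.exp (-lam)) := by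
  obtain ⟨n, rfl⟩ : ∃ n, ν = n + 1 := ⟨ν - 1, by omega⟩
  simpa using aux lam n
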